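/- Fix λ > 0 and define f : ℝ → ℝ by f(θ₀) = cosh(√(λ/2)·e^{θ₀/2}) - e^{θ₀/2}. There exists a critical value λ_c > 0, characterized by 1 = √(λ_c/2)·sinh(√((λ_c+2)/2)), such that: if λ > λ_c then f has no zero; if λ = λ_c then f has exactly one zero; and if 0 < λ < λ_c then f has exactly two zeros. -/

import Mathlib

open Real Set

noncomputable def gfun (lam u : ℝ) : ℝ := Real.cosh (Real.sqrt (lam / 2) * u) - u

noncomputable def mpt (lam : ℝ) : ℝ :=
  Real.arsinh (1 / Real.sqrt (lam / 2)) / Real.sqrt (lam / 2)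

lemma gfun_hasDeriv (lam u : ℝ) :
    HasDerivAt (gfun lam)
      (Real.sinh (Real.sqrt (lam / 2) * u) * Real.sqrt (lam / 2) - 1) u := by
  have h1 : HasDerivAt (fun v : ℝ => Real.sqrt (lam / 2) * v) (Real.sqrt (lam / 2)) u := by
    simpa only [mul_one, id] using (hasDerivAt_id u).const_mul (Real.sqrt (lam / 2))
  have h2 : HasDerivAt (fun v : ℝ => Real.cosh (Real.sqrt (lam / 2) * v))
      (Real.sinh (Real.sqrt (lam / 2) * u) * Real.sqrt (lam / 2)) u :=
    (Real.hasDerivAt_cosh _).comp u h1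
  exact h2.sub (hasDerivAt_id u)

lemma gfun_continuous (lam : ℝ) : Continuous (gfun lam) :=
  (Real.continuous_cosh.comp (continuous_const.mul continuous_id)).sub continuous_id

lemma s_pos {lam : ℝ} (h : 0 < lam) : 0 < Real.sqrt (lam / 2) :=
  Real.sqrt_pos.2 (by linarith)

lemma gfun_anti {lam : ℝ} (hlam : 0 < lam) : StrictAntiOn (gfun lam) (Iic (mpt lam)) := by
  have hs := s_pos hlam
  refine strictAntiOn_of_deriv_neg (convex_Iic _) (gfun_continuous lam).continuousOn ?_
  intro x hx
  rw [interior_Iic] at hx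
  rw [(gfun_hasDeriv lam x).deriv]
  have hxm : x < mpt lam := hx
  have h1 : Real.sqrt (lam / 2) * x < Real.arsinh (1 / Real.sqrt (lam / 2)) := by
    have := mul_lt_mul_of_pos_left hxm hs
    rwa [mpt, mul_div_cancel₀ _ hs.ne'] at this
  have h2 : Real.sinh (Real.sqrt (lam / 2) * x) < 1 / Real.sqrt (lam / 2) := by
    have := Real.sinh_lt_sinh.2 h1
    rwa [Real.sinh_arsinh] at this
  have := mul_lt_mul_of_pos_right h2 hs
  rw [one_div, inv_mul_cancel₀ hs.ne'] at this
  linarith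

lemma gfun_mono {lam : ℝ} (hlam : 0 < lam) : StrictMonoOn (gfun lam) (Ici (mpt lam)) := by
  have hs := s_pos hlam
  refine strictMonoOn_of_deriv_pos (convex_Ici _) (gfun_continuous lam).continuousOn ?_
  intro x hx
  rw [interior_Ici] at hx
  rw [(gfun_hasDeriv lam x).deriv]
  have hxm : mpt lam < x := hx
  have h1 : Real.arsinh (1 / Real.sqrt (lam / 2)) < Real.sqrt (lam / 2) * x := by
    have := mul_lt_mul_of_pos_left hxm hs
    rwa [mpt, mul_div_cancel₀ _ hs.ne'] at this
  have h2 : 1 / Real.sqrt (lam / 2) < Real.sinh (Real.sqrt (lam / 2) * x) := by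
    have := Real.sinh_lt_sinh.2 h1
    rwa [Real.sinh_arsinh] at this
  have := mul_lt_mul_of_pos_right h2 hs
  rw [one_div, inv_mul_cancel₀ hs.ne'] at this
  linarith

lemma tangency {lamc : ℝ} (h0 : 0 < lamc)
    (hchar : 1 = Real.sqrt (lamc / 2) * Real.sinh (Real.sqrt ((lamc + 2) / 2))) :
    gfun lamc (Real.sqrt (1 + 2 / lamc)) = 0 ∧ mpt lamc = Real.sqrt (1 + 2 / lamc) := by
  set s := Real.sqrt (lamc / 2) with hsdef
  have hs : 0 < s := s_pos h0
  set u := Real.sqrt (1 + 2 / lamc) with hudef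
  have hu : 0 < u := Real.sqrt_pos.2 (by positivity)
  have hsu : s * u = Real.sqrt ((lamc + 2) / 2) := by
    rw [hsdef, hudef, ← Real.sqrt_mul (by positivity)]
    congr 1
    field_simp
  have hsinh : Real.sinh (s * u) = 1 / s := by
    rw [hsu, eq_div_iff hs.ne', mul_comm]
    exact hchar.symm
  have hs2 : s ^ 2 = lamc / 2 := Real.sq_sqrt (by positivity)
  have hu2 : u ^ 2 = 1 + 2 / lamc := Real.sq_sqrt (by positivity)
  have hcoshsq : Real.cosh (s * u) ^ 2 = u ^ 2 := by
    rw [Real.cosh_sq, hsinh, hu2]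
    have : (1 / s) ^ 2 = 2 / lamc := by
      rw [div_pow, one_pow, hs2]
      field_simp
    rw [this]; ring
  have hcosh : Real.cosh (s * u) = u := by
    have h1 : Real.cosh (s * u) = Real.sqrt (u ^ 2) := by
      rw [← hcoshsq, Real.sqrt_sq (Real.cosh_pos _).le]
    rwa [Real.sqrt_sq hu.le] at h1
  constructor
  · simp [gfun, ← hsdef, hcosh]
  · have harc : Real.arsinh (1 / s) = s * u := by
      rw [← hsinh, Real.arsinh_sinh]
    rw [mpt, ← hsdef, harc, mul_div_cancel_left₀ _ hs.ne']

lemma gfun_min {lamc : ℝ} (h0 : 0 < lamc)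
    (hchar : 1 = Real.sqrt (lamc / 2) * Real.sinh (Real.sqrt ((lamc + 2) / 2))) :
    ∀ v : ℝ, v ≠ Real.sqrt (1 + 2 / lamc) → 0 < gfun lamc v := by
  obtain ⟨hz, hm⟩ := tangency h0 hchar
  intro v hv
  rw [← hm] at hv
  rcases lt_or_gt_of_ne hv with h | h
  · have := gfun_anti h0 (mem_Iic.2 h.le) (mem_Iic.2 le_rfl) h
    rw [hm, hz] at this
    exact this
  · have := gfun_mono h0 (mem_Ici.2 le_rfl) (mem_Ici.2 h.le) h
    rw [hm, hz] at this
    exact this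

lemma zero_ge_one {lam u : ℝ} (h : gfun lam u = 0) : 1 ≤ u := by
  have h1 : Real.cosh (Real.sqrt (lam / 2) * u) = u := by
    have := h; unfold gfun at this; linarith
  linarith [Real.one_le_cosh (Real.sqrt (lam / 2) * u)]

lemma zeros_classify {lam : ℝ} (hlam : 0 < lam) {a b : ℝ} (hab : a < b)
    (ha : gfun lam a = 0) (hb : gfun lam b = 0) :
    ∀ c, gfun lam c = 0 → c = a ∨ c = b := by
  have hanti := gfun_anti hlam
  have hmono := gfun_mono hlam
  have ham : a ≤ mpt lam := by
    by_contra h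
    push_neg at h
    have := hmono (mem_Ici.2 h.le) (mem_Ici.2 (h.le.trans hab.le)) hab
    rw [ha, hb] at this; exact lt_irrefl 0 this
  have hbm : mpt lam ≤ b := by
    by_contra h
    push_neg at h
    have := hanti (mem_Iic.2 (hab.le.trans h.le)) (mem_Iic.2 h.le) hab
    rw [ha, hb] at this; exact lt_irrefl 0 this
  intro c hc
  rcases le_total c (mpt lam) with h | h
  · exact Or.inl (hanti.injOn (mem_Iic.2 h) (mem_Iic.2 ham) (by rw [hc, ha]))
  · exact Or.inr (hmono.injOn (mem_Ici.2 h) (mem_Ici.2 hbm) (by rw [hc, hb]))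

lemma exists_lamc : ∃ lamc : ℝ, 0 < lamc ∧
    1 = Real.sqrt (lamc / 2) * Real.sinh (Real.sqrt ((lamc + 2) / 2)) := by
  set h : ℝ → ℝ := fun x => Real.sqrt (x / 2) * Real.sinh (Real.sqrt ((x + 2) / 2)) with hdef
  have hcont : Continuous h := by
    apply Continuous.mul
    · exact Real.continuous_sqrt.comp (continuous_id.div_const 2)
    · exact Real.continuous_sinh.comp
        (Real.continuous_sqrt.comp ((continuous_id.add continuous_const).div_const 2))
  have hlow : h (1 / 50) < 1 := by
    have e1 : Real.sqrt ((1 / 50 : ℝ) / 2) = 1 / 10 := by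
      rw [show ((1 : ℝ) / 50) / 2 = (1 / 10) ^ 2 by norm_num]
      exact Real.sqrt_sq (by norm_num)
    have e2 : Real.sqrt (((1 : ℝ) / 50 + 2) / 2) ≤ 2 := by
      have h4 : Real.sqrt (((1 : ℝ) / 50 + 2) / 2) ≤ Real.sqrt 4 :=
        Real.sqrt_le_sqrt (by norm_num)
      have h5 : Real.sqrt 4 = 2 := by
        rw [show (4 : ℝ) = 2 ^ 2 by norm_num, Real.sqrt_sq (by norm_num : (0:ℝ) ≤ 2)]
      linarith
    have hsinh_lt : Real.sinh (Real.sqrt (((1 : ℝ) / 50 + 2) / 2)) < 4 := by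
      rw [Real.sinh_eq]
      have hexple : Real.exp (Real.sqrt (((1 : ℝ) / 50 + 2) / 2)) ≤ Real.exp 2 :=
        Real.exp_le_exp.2 e2
      have he2 : Real.exp 2 < 8 := by
        have := Real.exp_one_lt_d9
        have h2 : Real.exp 2 = Real.exp 1 * Real.exp 1 := by
          rw [← Real.exp_add]; norm_num
        nlinarith [Real.exp_pos 1]
      have hpos := Real.exp_pos (-(Real.sqrt (((1 : ℝ) / 50 + 2) / 2)))
      linarith
    rw [hdef]
    simp only [e1]
    have hsinh_pos : 0 < Real.sinh (Real.sqrt (((1 : ℝ) / 50 + 2) / 2)) := by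
      rw [Real.sinh_pos_iff]
      exact Real.sqrt_pos.2 (by norm_num)
    nlinarith
  have hhigh : 1 ≤ h 2 := by
    have e1 : Real.sqrt ((2 : ℝ) / 2) = 1 := by norm_num
    have e2 : (1 : ℝ) ≤ Real.sqrt ((2 + 2) / 2) := by
      rw [show ((2 : ℝ) + 2) / 2 = 2 by norm_num]
      nlinarith [Real.sq_sqrt (by norm_num : (0:ℝ) ≤ 2), Real.sqrt_nonneg (2:ℝ)]
    have hs1 : Real.sinh 1 ≤ Real.sinh (Real.sqrt ((2 + 2) / 2)) := Real.sinh_le_sinh.2 e2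
    have hs2 : 1 < Real.sinh 1 := by
      rw [Real.sinh_eq]
      have h1 := Real.exp_one_gt_d9
      have h2 : Real.exp (-1 : ℝ) = (Real.exp 1)⁻¹ := by
        rw [← Real.exp_neg]
      have h3 : Real.exp (-1 : ℝ) < 0.4 := by
        rw [h2]
        rw [inv_lt_comm₀ (Real.exp_pos 1) (by norm_num)]
        linarith
      linarith
    rw [hdef]; simp only [e1, one_mul]; linarith
  have hsub := intermediate_value_Icc (by norm_num : (1:ℝ)/50 ≤ 2) hcont.continuousOn
  have h1 : (1 : ℝ) ∈ Icc (h (1/50)) (h 2) := ⟨hlow.le, hhigh⟩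
  obtain ⟨lamc, hmem, heq⟩ := hsub h1
  exact ⟨lamc, lt_of_lt_of_le (by norm_num) hmem.1, heq.symm⟩

theorem critical_lambda_zero_count (lam : ℝ) (hlam : 0 < lam) :
    let f : ℝ → ℝ := fun θ₀ =>
      Real.cosh (Real.sqrt (lam / 2) * Real.exp (θ₀ / 2)) - Real.exp (θ₀ / 2)
    ∃ lamc : ℝ, 0 < lamc ∧
      1 = Real.sqrt (lamc / 2) * Real.sinh (Real.sqrt ((lamc + 2) / 2)) ∧
      (lamc < lam → ∀ θ₀ : ℝ, f θ₀ ≠ 0) ∧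
      (lam = lamc → ∃! θ₀ : ℝ, f θ₀ = 0) ∧
      (lam < lamc → ∃ a b : ℝ, a ≠ b ∧ f a = 0 ∧ f b = 0 ∧
        ∀ c : ℝ, f c = 0 → c = a ∨ c = b) := by
  intro f
  obtain ⟨lamc, hc0, hchar⟩ := exists_lamc
  have hf : ∀ θ : ℝ, f θ = gfun lam (Real.exp (θ / 2)) := fun θ => rfl
  set u₀ := Real.sqrt (1 + 2 / lamc) with hu₀def
  have hu₀pos : 0 < u₀ := Real.sqrt_pos.2 (by positivity)
  obtain ⟨htan, hmeq⟩ := tangency hc0 hchar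
  refine ⟨lamc, hc0, hchar, ?_, ?_, ?_⟩
  · -- lamc < lam : no zeros
    intro hlt θ h0
    rw [hf] at h0
    set u := Real.exp (θ / 2) with hu
    have hupos : 0 < u := Real.exp_pos _
    have hslt : Real.sqrt (lamc / 2) < Real.sqrt (lam / 2) :=
      Real.sqrt_lt_sqrt (by positivity) (by linarith)
    have hcosh_lt : Real.cosh (Real.sqrt (lamc / 2) * u) < Real.cosh (Real.sqrt (lam / 2) * u) := by
      rw [Real.cosh_lt_cosh]
      rw [abs_of_nonneg (by positivity), abs_of_nonneg (by positivity)]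
      exact mul_lt_mul_of_pos_right hslt hupos
    have hge : 0 ≤ gfun lamc u := by
      rcases eq_or_ne u u₀ with h | h
      · rw [h, htan]
      · exact (gfun_min hc0 hchar u h).le
    have : 0 < gfun lam u := by
      unfold gfun at hge ⊢
      linarith
    rw [h0] at this; exact lt_irrefl 0 this
  · -- lam = lamc : exactly one zero
    intro heq
    subst heq
    refine ⟨2 * Real.log u₀, ?_, ?_⟩
    · show f (2 * Real.log u₀) = 0
      rw [hf]
      have : Real.exp (2 * Real.log u₀ / 2) = u₀ := by
        rw [show 2 * Real.log u₀ / 2 = Real.log u₀ by ring, Real.exp_log hu₀pos]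
      rw [this, htan]
    · intro y hy
      have hy' : gfun lam (Real.exp (y / 2)) = 0 := hy
      have hexp : Real.exp (y / 2) = u₀ := by
        by_contra h
        exact (gfun_min hc0 hchar _ h).ne' hy'
      have : Real.exp (y / 2) = Real.exp (2 * Real.log u₀ / 2) := by
        rw [hexp, show 2 * Real.log u₀ / 2 = Real.log u₀ by ring, Real.exp_log hu₀pos]
      have := Real.exp_eq_exp.1 this
      linarith
  · -- lam < lamc : exactly two zeros
    intro hlt
    have hs : 0 < Real.sqrt (lam / 2) := s_pos hlam
    set s := Real.sqrt (lam / 2) with hsdef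
    have hslt : s < Real.sqrt (lamc / 2) :=
      Real.sqrt_lt_sqrt (by positivity) (by linarith)
    -- g lam u₀ < 0
    have hneg : gfun lam u₀ < 0 := by
      have hcosh_lt : Real.cosh (s * u₀) < Real.cosh (Real.sqrt (lamc / 2) * u₀) := by
        rw [Real.cosh_lt_cosh, abs_of_nonneg (by positivity), abs_of_nonneg (by positivity)]
        exact mul_lt_mul_of_pos_right hslt hu₀pos
      have h0 : gfun lamc u₀ = 0 := htan
      unfold gfun at h0 ⊢
      rw [← hsdef]
      linarith
    -- g lam 0 = 1
    have hzero : gfun lam 0 = 1 := by simp [gfun]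
    -- large point
    set U := max (u₀ + 1) (4 / s ^ 2) with hUdef
    have hU1 : u₀ < U := lt_of_lt_of_le (by linarith) (le_max_left _ _)
    have hU2 : 4 / s ^ 2 ≤ U := le_max_right _ _
    have hUpos : 0 < U := hu₀pos.trans hU1
    have hgU : 0 < gfun lam U := by
      have hx : 0 ≤ s * U := by positivity
      have hq := Real.quadratic_le_exp_of_nonneg hx
      have hl := Real.add_one_le_exp (-(s * U))
      have hcosh_ge : 1 + (s * U) ^ 2 / 4 ≤ Real.cosh (s * U) := by
        rw [Real.cosh_eq]
        nlinarith
      have h4 : 4 ≤ U * s ^ 2 := (div_le_iff₀ (by positivity)).1 hU2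
      unfold gfun
      rw [← hsdef]
      nlinarith
    -- IVT: zero a in [0, u₀]
    have hcont := (gfun_continuous lam).continuousOn (s := Icc 0 u₀)
    obtain ⟨a, haI, ha⟩ := intermediate_value_Icc' hu₀pos.le
      ((gfun_continuous lam).continuousOn)
      (show (0:ℝ) ∈ Icc (gfun lam u₀) (gfun lam 0) by
        constructor <;> [linarith; linarith])
    obtain ⟨b, hbI, hb⟩ := intermediate_value_Icc hU1.le
      ((gfun_continuous lam).continuousOn)
      (show (0:ℝ) ∈ Icc (gfun lam u₀) (gfun lam U) by
        constructor <;> [linarith; linarith])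
    have hane : a ≠ u₀ := by
      intro h; rw [h] at ha; rw [ha] at hneg; exact lt_irrefl 0 hneg
    have hbne : b ≠ u₀ := by
      intro h; rw [h] at hb; rw [hb] at hneg; exact lt_irrefl 0 hneg
    have halt : a < u₀ := lt_of_le_of_ne haI.2 hane
    have hbgt : u₀ < b := lt_of_le_of_ne hbI.1 (Ne.symm hbne)
    have hab : a < b := halt.trans hbgt
    have hapos : 0 < a := lt_of_lt_of_le one_pos (zero_ge_one ha)
    have hbpos : 0 < b := lt_of_lt_of_le one_pos (zero_ge_one hb)
    refine ⟨2 * Real.log a, 2 * Real.log b, ?_, ?_, ?_, ?_⟩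
    · intro h
      have h1 : Real.log a = Real.log b := by linarith
      have h2 : a = b := by
        have := congrArg Real.exp h1
        rwa [Real.exp_log hapos, Real.exp_log hbpos] at this
      exact hab.ne h2
    · show f (2 * Real.log a) = 0
      rw [hf, show 2 * Real.log a / 2 = Real.log a by ring, Real.exp_log hapos]; exact ha
    · show f (2 * Real.log b) = 0
      rw [hf, show 2 * Real.log b / 2 = Real.log b by ring, Real.exp_log hbpos]; exact hb
    · intro c hc
      have hc' : gfun lam (Real.exp (c / 2)) = 0 := hc
      rcases zeros_classify hlam hab ha hb _ hc' with h | h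
      · left
        have : c / 2 = Real.log a := by rw [← h, Real.log_exp]
        linarith
      · right
        have : c / 2 = Real.log b := by rw [← h, Real.log_exp]
        linarith
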